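/- Let Û = (Û_1,...,Û_d) : ℝ → (ℂ^N)^d solve the Bérenger split ODE system: A_1 (d/dx)(ΣÛ_j) + (τ+σ)Û_1 = 0 and τÛ_j + iη_j A_j ΣÛ_k = 0 for j = 2,...,d, with σ, τ constants, τ ≠ 0. Then Ŵ := Σ_j Û_j satisfies A_1 dŴ/dx + ((τ+σ)/τ) L(τ,0,iη) Ŵ = 0, where L(τ,0,iη) = τI + iΣ_{j≥2}η_j A_j. Conversely, if Ŵ solves this scalar-prefactor ODE and one defines Û_j := -(iη_j/τ)A_j Ŵ for j ≥ 2 and Û_1 := Ŵ - Σ_{j≥2} Û_j, then Û solves the split system. -/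
import Mathlib

open Matrix

lemma sum_mulVec_aux {n : ℕ} {ι : Type*} (s : Finset ι)
    (M : ι → Matrix (Fin n) (Fin n) ℂ) (v : Fin n → ℂ) :
    (∑ j ∈ s, M j).mulVec v = ∑ j ∈ s, (M j).mulVec v := by
  induction s using Finset.cons_induction with
  | empty => simp [Matrix.zero_mulVec]
  | cons a s ha ih => simp [Matrix.add_mulVec, ih]

/-- Equivalence between the Bérenger split ODE system and the scalar-prefactor
ODE for `Ŵ = Σ Ûⱼ`: `A₁Ŵ' + ((τ+σ)/τ) L(τ,0,iη) Ŵ = 0`, together with the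
converse reconstruction of `Û` from `Ŵ`. -/
theorem berenger_split_ode_equivalence (n d : ℕ) [NeZero d]
    (A : Fin d → Matrix (Fin n) (Fin n) ℂ)
    (σ τ : ℂ) (hτ : τ ≠ 0) (η : Fin d → ℂ) :
    (∀ U : ℝ → Fin d → Fin n → ℂ,
      Differentiable ℝ (fun x => ∑ j, U x j) →
      (∀ x, (A 0).mulVec (deriv (fun y => ∑ j, U y j) x) + (τ + σ) • U x 0 = 0) →
      (∀ j : Fin d, j ≠ 0 → ∀ x,
        τ • U x j + (Complex.I * η j) • (A j).mulVec (∑ k, U x k) = 0) →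
      ∀ x, (A 0).mulVec (deriv (fun y => ∑ j, U y j) x)
        + ((τ + σ) / τ) • (τ • (1 : Matrix (Fin n) (Fin n) ℂ)
            + ∑ j ∈ Finset.univ.erase (0 : Fin d),
                (Complex.I * η j) • A j).mulVec (∑ j, U x j) = 0) ∧
    (∀ W : ℝ → Fin n → ℂ, Differentiable ℝ W →
      (∀ x, (A 0).mulVec (deriv W x)
        + ((τ + σ) / τ) • (τ • (1 : Matrix (Fin n) (Fin n) ℂ)
            + ∑ j ∈ Finset.univ.erase (0 : Fin d),
                (Complex.I * η j) • A j).mulVec (W x) = 0) →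
      ∀ U : ℝ → Fin d → Fin n → ℂ,
        (U = fun x j => if j = 0 then
            W x + ∑ k ∈ Finset.univ.erase (0 : Fin d),
              (Complex.I * η k / τ) • (A k).mulVec (W x)
          else (-(Complex.I * η j / τ)) • (A j).mulVec (W x)) →
        ((∀ x, (A 0).mulVec (deriv (fun y => ∑ j, U y j) x)
            + (τ + σ) • U x 0 = 0) ∧
          ∀ j : Fin d, j ≠ 0 → ∀ x,
            τ • U x j + (Complex.I * η j) • (A j).mulVec (∑ k, U x k) = 0)) := by
  constructor
  · intro U hdiff h1 h2 x
    set W : Fin n → ℂ := ∑ j, U x j with hW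
    have h2' : ∀ j ∈ Finset.univ.erase (0 : Fin d),
        (Complex.I * η j) • (A j).mulVec W = -(τ • U x j) := by
      intro j hj
      have := h2 j (Finset.ne_of_mem_erase hj) x
      rw [← hW] at this
      linear_combination this
    have hmv : (τ • (1 : Matrix (Fin n) (Fin n) ℂ)
        + ∑ j ∈ Finset.univ.erase (0 : Fin d),
            (Complex.I * η j) • A j).mulVec W
        = τ • U x 0 := by
      rw [Matrix.add_mulVec, sum_mulVec_aux]
      simp only [Matrix.smul_mulVec, Matrix.one_mulVec]
      rw [Finset.sum_congr rfl h2']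
      have hsplit : W = U x 0 + ∑ j ∈ Finset.univ.erase (0 : Fin d), U x j := by
        rw [hW, ← Finset.add_sum_erase _ _ (Finset.mem_univ (0 : Fin d))]
      rw [hsplit, Finset.sum_neg_distrib, ← Finset.smul_sum, smul_add]
      abel
    rw [hmv, smul_smul, div_mul_cancel₀ _ hτ]
    exact h1 x
  · intro W hWdiff hode U hU
    have hite : ∀ (y : ℝ) (j : Fin d), j ∈ Finset.univ.erase (0 : Fin d) →
        (if j = 0 then W y + ∑ k ∈ Finset.univ.erase (0 : Fin d),
            (Complex.I * η k / τ) • (A k).mulVec (W y)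
          else (-(Complex.I * η j / τ)) • (A j).mulVec (W y))
        = -((Complex.I * η j / τ) • (A j).mulVec (W y)) := by
      intro y j hj
      rw [if_neg (Finset.ne_of_mem_erase hj), neg_smul]
    have hsum : (fun y => ∑ j, U y j) = W := by
      funext y
      rw [hU, ← Finset.add_sum_erase _ _ (Finset.mem_univ (0 : Fin d)),
        Finset.sum_congr rfl (hite y)]
      beta_reduce
      rw [if_pos rfl, Finset.sum_neg_distrib]
      abel
    constructor
    · intro x
      rw [hsum]
      have hode' := hode x
      have hmv : (τ • (1 : Matrix (Fin n) (Fin n) ℂ)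
          + ∑ j ∈ Finset.univ.erase (0 : Fin d),
              (Complex.I * η j) • A j).mulVec (W x)
          = τ • W x + ∑ j ∈ Finset.univ.erase (0 : Fin d),
              (Complex.I * η j) • (A j).mulVec (W x) := by
        rw [Matrix.add_mulVec, sum_mulVec_aux]
        simp [Matrix.smul_mulVec]
      rw [hmv] at hode'
      have hU0 : (τ + σ) • U x 0
          = ((τ + σ) / τ) • (τ • W x + ∑ j ∈ Finset.univ.erase (0 : Fin d),
              (Complex.I * η j) • (A j).mulVec (W x)) := by
        rw [hU]
        beta_reduce
        rw [if_pos rfl]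
        rw [smul_add, smul_add, Finset.smul_sum, Finset.smul_sum,
          smul_smul, div_mul_cancel₀ _ hτ]
        congr 1
        refine Finset.sum_congr rfl fun j _ => ?_
        rw [smul_smul, smul_smul]
        congr 1
        ring
      rw [hU0]
      exact hode'
    · intro j hj x
      have hsumx : (∑ k, U x k) = W x := congrFun hsum x
      rw [hsumx, hU]
      simp only [if_neg hj]
      rw [smul_smul, ← add_smul]
      have : τ * -(Complex.I * η j / τ) + Complex.I * η j = 0 := by
        field_simp
        ring
      rw [this, zero_smul]
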